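/- For a monic complex polynomial f of degree n ≥ 1, the set of roots of f' is contained in the convex hull of the roots of f; consequently, if all roots of f lie in a closed disk D, then all roots of f' lie in D. -/

import Mathlib

open Polynomial

theorem stmt_18 (f : Polynomial ℂ) (hm : f.Monic) (hd : 1 ≤ f.natDegree) :
    (∀ z : ℂ, f.derivative.IsRoot z → z ∈ convexHull ℝ {w : ℂ | f.IsRoot w}) ∧
    (∀ (c : ℂ) (ρ : ℝ), (∀ w : ℂ, f.IsRoot w → w ∈ Metric.closedBall c ρ) →
      ∀ z : ℂ, f.derivative.IsRoot z → z ∈ Metric.closedBall c ρ) := by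
  classical
  have main : ∀ z : ℂ, f.derivative.IsRoot z → z ∈ convexHull ℝ {w : ℂ | f.IsRoot w} := by
    intro z hz
    by_cases hfz : f.IsRoot z
    · exact subset_convexHull ℝ _ hfz
    set R := f.roots with hR
    have hf0 : f ≠ 0 := hm.ne_zero
    have hsplit : f = (R.map fun a => X - C a).prod :=
      (IsAlgClosed.splits f).eq_prod_roots_of_monic hm
    have hfeval : f.eval z = (R.map fun a => z - a).prod := by
      conv_lhs => rw [hsplit]
      rw [eval_multiset_prod, Multiset.map_map]
      simp
    have hne : ∀ r ∈ R, z - r ≠ 0 := by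
      intro r hr h
      have : r = z := by linear_combination -h
      exact hfz (by rw [← this]; exact isRoot_of_mem_roots hr)
    -- f'(z) = Σ_{r∈R} ∏_{a ∈ R.erase r} (z - a)
    have hder : f.derivative.eval z
        = (R.map fun r => ((R.erase r).map fun a => z - a).prod).sum := by
      conv_lhs => rw [hsplit]
      rw [derivative_prod, ← coe_evalRingHom, map_multiset_sum, Multiset.map_map, coe_evalRingHom]
      congr 1
      refine Multiset.map_congr rfl fun r hr => ?_
      simp [eval_multiset_prod, Multiset.map_map]
    -- Σ 1/(z-r) = 0
    have hsum : (R.map fun r => (z - r)⁻¹).sum = 0 := by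
      have h1 : (R.map fun r => (z - r)⁻¹).sum * f.eval z = 0 := by
        rw [← Multiset.sum_map_mul_right]
        have : (R.map fun r => (z - r)⁻¹ * f.eval z)
            = R.map fun r => ((R.erase r).map fun a => z - a).prod := by
          refine Multiset.map_congr rfl fun r hr => ?_
          have hfr : f.eval z = (z - r) * ((R.erase r).map fun a => z - a).prod := by
            rw [hfeval, ← Multiset.prod_cons, ← Multiset.map_cons, Multiset.cons_erase hr]
          rw [hfr, ← mul_assoc, inv_mul_cancel₀ (hne r hr), one_mul]
        rw [this, ← hder, hz]
      have hfz' : f.eval z ≠ 0 := hfz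
      exact (mul_eq_zero.mp h1).resolve_right hfz'
    -- conjugate: Σ (z - r) / normSq (z - r) = 0
    have hsum2 : (R.map fun r => (z - r) * ((Complex.normSq (z - r) : ℝ) : ℂ)⁻¹).sum = 0 := by
      have := congrArg (starRingEnd ℂ) hsum
      rw [map_multiset_sum, Multiset.map_map, map_zero] at this
      rw [← this]
      refine congrArg _ (Multiset.map_congr rfl fun r hr => ?_)
      conv_rhs => rw [Function.comp_apply, map_inv₀, Complex.inv_def,
        Complex.normSq_conj, Complex.conj_conj]
      rw [Complex.ofReal_inv]
    -- weights
    set w : ℂ → ℝ := fun r => (R.count r : ℝ) * (Complex.normSq (z - r))⁻¹ with hw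
    have hwpos : ∀ r ∈ R.toFinset, 0 < w r := by
      intro r hr
      have hrR := Multiset.mem_toFinset.mp hr
      apply mul_pos
      · exact_mod_cast Multiset.count_pos.mpr hrR
      · exact inv_pos.mpr (Complex.normSq_pos.mpr (hne r hrR))
    have hRne : R.toFinset.Nonempty := by
      have hcard : Multiset.card R = f.natDegree :=
        splits_iff_card_roots.mp (IsAlgClosed.splits f)
      have : R ≠ 0 := by
        intro h; rw [h] at hcard; simp at hcard; omega
      obtain ⟨r, hr⟩ := Multiset.exists_mem_of_ne_zero this
      exact ⟨r, Multiset.mem_toFinset.mpr hr⟩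
    have hWpos : 0 < ∑ r ∈ R.toFinset, w r := Finset.sum_pos hwpos hRne
    -- Σ w r • (z - r) = 0
    have hsum3 : ∑ r ∈ R.toFinset, w r • (z - r) = 0 := by
      rw [← hsum2, Finset.sum_multiset_map_count]
      refine Finset.sum_congr rfl fun r hr => ?_
      rw [hw]
      simp only [Complex.real_smul]
      push_cast
      ring
    have hz_eq : R.toFinset.centerMass w id = z := by
      rw [Finset.centerMass]
      have h5 : ∑ r ∈ R.toFinset, w r • id r = (∑ r ∈ R.toFinset, w r) • z := by
        simp only [id]
        have h4 := hsum3
        simp only [smul_sub] at h4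
        rw [Finset.sum_sub_distrib, sub_eq_zero] at h4
        rw [← h4, Finset.sum_smul]
      rw [h5, smul_smul, inv_mul_cancel₀ (ne_of_gt hWpos), one_smul]
    rw [← hz_eq]
    exact Finset.centerMass_mem_convexHull _ (fun r hr => (hwpos r hr).le) hWpos
      (fun r hr => isRoot_of_mem_roots (Multiset.mem_toFinset.mp hr))
  refine ⟨main, fun c ρ h z hz => ?_⟩
  exact convexHull_min (fun w hw => h w hw) (convex_closedBall c ρ) (main z hz)
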